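/- For all positive even integers a, b, a', b' with (a,b) ≠ (a',b'), there exist positive even integers c, d and nonnegative integers k₁, k₂, l₁, l₂ such that the string 0^a#0^b#0^c#0^d#0^{k₁}#0^{k₂}#0^{l₁}#0^{l₂} is a yes-instance of the promise problem XOR-EQ and the string 0^{a'}#0^{b'}#0^c#0^d#0^{k₁}#0^{k₂}#0^{l₁}#0^{l₂} is a no-instance of XOR-EQ. -/

import Mathlib

/-- The alphabet `{0, #}` (`z` is the symbol `0`, `h` is the symbol `#`). -/
inductive XSym : Type
  | z : XSym
  | h : XSym
deriving DecidableEq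

/-- The block `0^n`. -/
def zeros (n : ℕ) : List XSym := List.replicate n XSym.z

/-- The string `0^a # 0^b # 0^c # 0^d # 0^{k1} # 0^{k2} # 0^{l1} # 0^{l2}`. -/
def xweWord (a b c d k1 k2 l1 l2 : ℕ) : List XSym :=
  zeros a ++ [XSym.h] ++ zeros b ++ [XSym.h] ++ zeros c ++ [XSym.h] ++ zeros d ++ [XSym.h] ++
    zeros k1 ++ [XSym.h] ++ zeros k2 ++ [XSym.h] ++ zeros l1 ++ [XSym.h] ++ zeros l2

/-- `(-1) ^ [u = v]`. -/
def xweSign (u v : ℕ) : ℤ := if u = v then -1 else 1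

/-- The promise of the problem `XOR-EQ`. -/
def xwePromise (a b c d k1 k2 l1 l2 : ℕ) : Prop :=
  0 < a ∧ Even a ∧ 0 < b ∧ Even b ∧ 0 < c ∧ Even c ∧ 0 < d ∧ Even d ∧
    (a : ℤ) - (c : ℤ) + xweSign a c * ((k1 : ℤ) - (k2 : ℤ)) =
      (b : ℤ) - (d : ℤ) + xweSign b d * ((l1 : ℤ) - (l2 : ℤ))

/-- Yes-instances of `XOR-EQ`: promised strings where exactly one of
`a = c`, `b = d` holds. -/
def XorEqYes : Set (List XSym) :=
  {w | ∃ a b c d k1 k2 l1 l2 : ℕ, xwePromise a b c d k1 k2 l1 l2 ∧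
    Xor' (a = c) (b = d) ∧ w = xweWord a b c d k1 k2 l1 l2}

/-- No-instances of `XOR-EQ`: the remaining promised strings. -/
def XorEqNo : Set (List XSym) :=
  {w | ∃ a b c d k1 k2 l1 l2 : ℕ, xwePromise a b c d k1 k2 l1 l2 ∧
    ¬ Xor' (a = c) (b = d) ∧ w = xweWord a b c d k1 k2 l1 l2}

lemma exists_nat_diff (t : ℤ) : ∃ k1 k2 : ℕ, (k1 : ℤ) - (k2 : ℤ) = t :=
  ⟨t.toNat, (-t).toNat, by omega⟩

/-- any two distinct pairs of positive even numbers can be completed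
to a yes-instance and a no-instance of `XOR-EQ` by a common suffix. -/
theorem stmt3 (a b a' b' : ℕ)
    (ha : 0 < a) (hae : Even a) (hb : 0 < b) (hbe : Even b)
    (ha' : 0 < a') (hae' : Even a') (hb' : 0 < b') (hbe' : Even b')
    (hne : (a, b) ≠ (a', b')) :
    ∃ c d k1 k2 l1 l2 : ℕ, 0 < c ∧ Even c ∧ 0 < d ∧ Even d ∧
      xweWord a b c d k1 k2 l1 l2 ∈ XorEqYes ∧
      xweWord a' b' c d k1 k2 l1 l2 ∈ XorEqNo := by
  obtain ⟨r, hr⟩ := id hae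
  obtain ⟨s0, hs0⟩ := id hbe
  obtain ⟨r', hr'⟩ := id hae'
  obtain ⟨s', hs'⟩ := id hbe'
  by_cases hA : a = a'
  · have hB : b ≠ b' := by
      intro h; exact hne (by rw [hA, h])
    obtain ⟨l1, l2, hl⟩ := exists_nat_diff ((s0 : ℤ) - s')
    obtain ⟨k1, k2, hk⟩ := exists_nat_diff (((a + a' + 2 : ℕ) : ℤ) - a - ((s0 : ℤ) - s'))
    refine ⟨a + a' + 2, b, k1, k2, l1, l2, by omega, ⟨r + r' + 1, by omega⟩, hb, hbe, ?_, ?_⟩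
    · refine ⟨a, b, a + a' + 2, b, k1, k2, l1, l2,
        ⟨ha, hae, hb, hbe, by omega, ⟨r + r' + 1, by omega⟩, hb, hbe, ?_⟩, ?_, rfl⟩
      · have h1 : xweSign a (a + a' + 2) = 1 := by unfold xweSign; rw [if_neg (by omega)]
        have h2 : xweSign b b = -1 := by unfold xweSign; rw [if_pos rfl]
        rw [h1, h2]; push_cast; omega
      · exact Or.inr ⟨rfl, by omega⟩
    · refine ⟨a', b', a + a' + 2, b, k1, k2, l1, l2,
        ⟨ha', hae', hb', hbe', by omega, ⟨r + r' + 1, by omega⟩, hb, hbe, ?_⟩, ?_, rfl⟩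
      · have h1 : xweSign a' (a + a' + 2) = 1 := by unfold xweSign; rw [if_neg (by omega)]
        have h2 : xweSign b' b = 1 := by unfold xweSign; rw [if_neg (by omega)]
        rw [h1, h2]; push_cast at hk ⊢; omega
      · simp only [Xor', Xor]
        have h1 : a' ≠ a + a' + 2 := by omega
        have h2 : b' ≠ b := fun h => hB h.symm
        tauto
  · obtain ⟨k1, k2, hk⟩ := exists_nat_diff (((b + b' + 2 : ℕ) : ℤ) - b -
      ((r' : ℤ) - r + ((b + b' + 2 : ℕ) : ℤ) - s0 - s'))
    obtain ⟨l1, l2, hl⟩ := exists_nat_diff ((r' : ℤ) - r + ((b + b' + 2 : ℕ) : ℤ) - s0 - s')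
    refine ⟨a, b + b' + 2, k1, k2, l1, l2, ha, hae, by omega, ⟨s0 + s' + 1, by omega⟩, ?_, ?_⟩
    · refine ⟨a, b, a, b + b' + 2, k1, k2, l1, l2,
        ⟨ha, hae, hb, hbe, ha, hae, by omega, ⟨s0 + s' + 1, by omega⟩, ?_⟩, ?_, rfl⟩
      · have h1 : xweSign a a = -1 := by unfold xweSign; rw [if_pos rfl]
        have h2 : xweSign b (b + b' + 2) = 1 := by unfold xweSign; rw [if_neg (by omega)]
        rw [h1, h2]; push_cast at hk hl ⊢; omega
      · exact Or.inl ⟨rfl, by omega⟩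
    · refine ⟨a', b', a, b + b' + 2, k1, k2, l1, l2,
        ⟨ha', hae', hb', hbe', ha, hae, by omega, ⟨s0 + s' + 1, by omega⟩, ?_⟩, ?_, rfl⟩
      · have h1 : xweSign a' a = 1 := by unfold xweSign; rw [if_neg (by omega)]
        have h2 : xweSign b' (b + b' + 2) = 1 := by unfold xweSign; rw [if_neg (by omega)]
        rw [h1, h2]; push_cast at hk hl ⊢; omega
      · simp only [Xor', Xor]
        have h1 : a' ≠ a := fun h => hA h.symm
        have h2 : b' ≠ b + b' + 2 := by omega
        tauto
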